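/- Every idempotent of the group algebra F₂G of a finite abelian group G of odd order is a sum of elements of the form g + g² + g⁴ + ⋯ + g^{2^l}, where for each such summand l is the smallest nonnegative integer with g^{2^{l+1}} = g, and the orbits involved are pairwise disjoint. -/

import Mathlib

open Finset

section Aux

variable {G : Type*} [CommGroup G] [Fintype G]

private lemma aux_add_self (x : MonoidAlgebra (ZMod 2) G) : x + x = 0 := by
  have h : x + x = (2 : ZMod 2) • x := (two_smul (ZMod 2) x).symm
  rw [h, show (2 : ZMod 2) = 0 by decide, zero_smul]

private lemma aux_frob (x : MonoidAlgebra (ZMod 2) G) :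
    x * x = MonoidAlgebra.mapDomain (fun g => g ^ 2) x := by
  have sqadd : ∀ y z : MonoidAlgebra (ZMod 2) G, (y + z) * (y + z) = y * y + z * z := by
    intro y z
    have h : (y + z) * (y + z) = y * y + (y * z + y * z) + z * z := by ring
    rw [h, aux_add_self, add_zero]
  induction x using MonoidAlgebra.induction with
  | zero => simp
  | single_add a b f haf hb ih =>
    have hb2 : ∀ c : ZMod 2, c * c = c := by decide
    have hs : (MonoidAlgebra.single a b : MonoidAlgebra (ZMod 2) G) *
        MonoidAlgebra.single a b = MonoidAlgebra.single (a ^ 2) b := by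
      rw [MonoidAlgebra.single_mul_single, hb2 b, sq]
    rw [sqadd (MonoidAlgebra.single a b) f, ih, hs, MonoidAlgebra.mapDomain_add,
      MonoidAlgebra.mapDomain_single]

end Aux

/-- Every idempotent of `F₂G`, `G` a finite abelian group of odd order, is a sum of
orbit-indicator elements `g + g² + g⁴ + ⋯ + g^(2^(l g))` over pairwise disjoint orbits
of the squaring map, where for each summand `l g` is the smallest nonnegative integer
with `g^(2^(l g + 1)) = g`. -/
theorem idempotent_eq_sum_orbits
    (G : Type*) [CommGroup G] [Fintype G] (hodd : Odd (Fintype.card G))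
    (e : MonoidAlgebra (ZMod 2) G) (he : IsIdempotentElem e) :
    ∃ (S : Finset G) (l : G → ℕ),
      (∀ g ∈ S, g ^ (2 ^ (l g + 1)) = g ∧ ∀ j : ℕ, g ^ (2 ^ (j + 1)) = g → l g ≤ j) ∧
      (∀ g ∈ S, ∀ g' ∈ S, g ≠ g' → ∀ i j : ℕ, g ^ (2 ^ i) ≠ g' ^ (2 ^ j)) ∧
      e = ∑ g ∈ S, ∑ i ∈ Finset.range (l g + 1),
            MonoidAlgebra.single (g ^ (2 ^ i)) (1 : ZMod 2) := by
  classical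
  -- squaring is injective
  have hcop : (Nat.card G).Coprime 2 := by
    rw [Nat.coprime_two_right, Nat.card_eq_fintype_card]; exact hodd
  have hinj : Function.Injective (fun g : G => g ^ 2) := (powCoprime hcop).injective
  -- iterated squaring is injective
  have hinjk : ∀ k : ℕ, Function.Injective (fun g : G => g ^ (2 ^ k)) := by
    intro k
    induction k with
    | zero => simp only [pow_zero, pow_one]; exact Function.injective_id
    | succ k ihk =>
      intro x y hxy
      simp only at hxy
      have h1 : ∀ z : G, z ^ (2 ^ (k + 1)) = (z ^ 2) ^ (2 ^ k) := by
        intro z; rw [← pow_mul, pow_succ, mul_comm]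
      rw [h1 x, h1 y] at hxy
      exact hinj (ihk hxy)
  -- existence of the orbit length
  have hex : ∀ g : G, ∃ j : ℕ, g ^ (2 ^ (j + 1)) = g := by
    intro g
    have hdvd : orderOf g ∣ Nat.card G := orderOf_dvd_natCard g
    have hcop' : Nat.Coprime 2 (orderOf g) :=
      Nat.Coprime.coprime_dvd_right hdvd hcop.symm
    have hpos : 0 < orderOf g := orderOf_pos g
    have htpos : 0 < Nat.totient (orderOf g) := Nat.totient_pos.2 hpos
    refine ⟨Nat.totient (orderOf g) - 1, ?_⟩
    have ht : Nat.totient (orderOf g) - 1 + 1 = Nat.totient (orderOf g) :=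
      Nat.sub_add_cancel htpos
    rw [ht]
    have hmod : 2 ^ Nat.totient (orderOf g) ≡ 1 [MOD orderOf g] :=
      Nat.ModEq.pow_totient hcop'
    calc g ^ 2 ^ Nat.totient (orderOf g) = g ^ 1 := pow_eq_pow_iff_modEq.2 hmod
    _ = g := pow_one g
  set l : G → ℕ := fun g => Nat.find (hex g) with hl
  have hl1 : ∀ g : G, g ^ (2 ^ (l g + 1)) = g := fun g => Nat.find_spec (hex g)
  have hl2 : ∀ g : G, ∀ j : ℕ, g ^ (2 ^ (j + 1)) = g → l g ≤ j :=
    fun g j hj => Nat.find_le hj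
  -- e is fixed by the squaring map on coefficients
  have hmap : MonoidAlgebra.mapDomain (fun g : G => g ^ 2) e = e := by
    rw [← aux_frob e]; exact he
  have hfix : ∀ g : G, e.coeff (g ^ 2) = e.coeff g := by
    intro g
    conv_lhs => rw [← hmap]
    exact Finsupp.mapDomain_apply hinj e.coeff g
  have hpow : ∀ (g : G) (i : ℕ), e.coeff (g ^ (2 ^ i)) = e.coeff g := by
    intro g i
    induction i with
    | zero => simp
    | succ i ih =>
      have h1 : g ^ (2 ^ (i + 1)) = (g ^ (2 ^ i)) ^ 2 := by
        rw [← pow_mul, pow_succ]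
      rw [h1, hfix, ih]
  -- the relation "same squaring orbit"
  set r : G → G → Prop := fun g h => ∃ i j : ℕ, g ^ (2 ^ i) = h ^ (2 ^ j) with hr
  have hpowpow : ∀ (g : G) (i j : ℕ), (g ^ (2 ^ i)) ^ (2 ^ j) = g ^ (2 ^ (i + j)) := by
    intro g i j; rw [← pow_mul, ← pow_add]
  have hrefl : ∀ g, r g g := fun g => ⟨0, 0, rfl⟩
  have hsymm : ∀ {g h}, r g h → r h g := fun ⟨i, j, hij⟩ => ⟨j, i, hij.symm⟩
  have htrans : ∀ {g h t}, r g h → r h t → r g t := by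
    rintro g h t ⟨i, j, hij⟩ ⟨k, m, hkm⟩
    refine ⟨i + k, m + j, ?_⟩
    rw [← hpowpow g i k, hij, hpowpow, add_comm j k, ← hpowpow h k j, hkm, hpowpow]
  have econst : ∀ {g h}, r g h → e.coeff g = e.coeff h := by
    rintro g h ⟨i, j, hij⟩
    rw [← hpow g i, hij, hpow]
  -- representatives
  set s : Setoid G := ⟨r, ⟨hrefl, hsymm, htrans⟩⟩ with hs
  set rep : G → G := fun g => (Quotient.mk s g).out with hrep
  have hrep1 : ∀ g : G, r (rep g) g := fun g => Quotient.mk_out (s := s) g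
  have hrep2 : ∀ {g h : G}, r g h → rep g = rep h := by
    intro g h hgh
    simp only [hrep]
    rw [Quotient.sound (s := s) hgh]
  have hrepfix : ∀ g : G, rep (rep g) = rep g := fun g => hrep2 (hrep1 g)
  -- orbits
  set orbit : G → Finset G := fun g => (Finset.range (l g + 1)).image (fun i => g ^ (2 ^ i))
    with horbit
  have hA : ∀ (g : G) (i : ℕ), g ^ (2 ^ i) ∈ orbit g := by
    intro g i
    induction i with
    | zero =>
      exact Finset.mem_image.2 ⟨0, Finset.mem_range.2 (Nat.succ_pos _), rfl⟩
    | succ i ih =>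
      obtain ⟨k, hk, hkx⟩ := Finset.mem_image.1 ih
      rw [Finset.mem_range] at hk
      have h1 : g ^ (2 ^ (i + 1)) = (g ^ (2 ^ i)) ^ 2 := by rw [← pow_mul, pow_succ]
      rcases Nat.lt_or_ge k (l g) with hkl | hkl
      · refine Finset.mem_image.2 ⟨k + 1, Finset.mem_range.2 (by omega), ?_⟩
        rw [h1, ← hkx, ← pow_mul, pow_succ]
      · have hkeq : k = l g := by omega
        refine Finset.mem_image.2 ⟨0, Finset.mem_range.2 (Nat.succ_pos _), ?_⟩
        rw [h1, ← hkx, hkeq, ← pow_mul, ← pow_succ, hl1 g, pow_zero, pow_one]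
  have hC : ∀ (g x : G), x ^ 2 ∈ orbit g → x ∈ orbit g := by
    intro g x hx
    obtain ⟨k, hk, hkx⟩ := Finset.mem_image.1 hx
    rw [Finset.mem_range] at hk
    rcases Nat.eq_zero_or_pos k with hk0 | hkpos
    · subst hk0
      have : (g ^ (2 ^ (l g))) ^ 2 = x ^ 2 := by
        rw [← pow_mul, ← pow_succ, hl1 g, ← hkx, pow_zero, pow_one]
      have hxe : g ^ (2 ^ (l g)) = x := hinj this
      rw [← hxe]; exact hA g (l g)
    · have : (g ^ (2 ^ (k - 1))) ^ 2 = x ^ 2 := by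
        rw [← pow_mul, ← pow_succ, Nat.sub_add_cancel hkpos, hkx]
      have hxe : g ^ (2 ^ (k - 1)) = x := hinj this
      rw [← hxe]; exact hA g (k - 1)
  have hD : ∀ (g x : G) (j : ℕ), x ^ (2 ^ j) ∈ orbit g → x ∈ orbit g := by
    intro g x j
    induction j with
    | zero => simpa using id
    | succ j ih =>
      intro hx
      have h1 : x ^ (2 ^ (j + 1)) = (x ^ (2 ^ j)) ^ 2 := by rw [← pow_mul, pow_succ]
      rw [h1] at hx
      exact ih (hC g _ hx)
  have hE : ∀ {g x : G}, r g x → x ∈ orbit g := by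
    rintro g x ⟨i, j, hij⟩
    exact hD g x j (hij ▸ hA g i)
  have hmemr : ∀ {g x : G}, x ∈ orbit g → r g x := by
    intro g x hx
    obtain ⟨k, _, hkx⟩ := Finset.mem_image.1 hx
    exact ⟨k, 0, by rw [hkx, pow_zero, pow_one]⟩
  -- injectivity on the range
  have hF : ∀ g : G, ∀ i ∈ Finset.range (l g + 1), ∀ j ∈ Finset.range (l g + 1),
      g ^ (2 ^ i) = g ^ (2 ^ j) → i = j := by
    have key : ∀ (g : G), ∀ i j : ℕ, i < j → j < l g + 1 → g ^ (2 ^ i) ≠ g ^ (2 ^ j) := by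
      intro g i j hij hjl heq
      have hd : g = g ^ (2 ^ (j - i)) := by
        apply hinjk i
        show g ^ 2 ^ i = (g ^ 2 ^ (j - i)) ^ 2 ^ i
        rw [hpowpow, Nat.sub_add_cancel hij.le, heq]
      have hmin : l g ≤ j - i - 1 := by
        apply hl2 g
        rw [Nat.sub_add_cancel (by omega : 1 ≤ j - i)]
        exact hd.symm
      omega
    intro g i hi j hj heq
    rw [Finset.mem_range] at hi hj
    rcases lt_trichotomy i j with h | h | h
    · exact absurd heq (key g i j h hj)
    · exact h
    · exact absurd heq.symm (key g j i h hi)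
  -- everything on the support has coefficient 1
  have hone : ∀ a : G, a ∈ e.coeff.support → e.coeff a = 1 := by
    intro a ha
    have : e.coeff a ≠ 0 := Finsupp.mem_support_iff.1 ha
    revert this
    generalize e.coeff a = c
    revert c; decide
  -- the set of representatives
  set S : Finset G := e.coeff.support.image rep with hS
  have hSsupp : ∀ g ∈ S, g ∈ e.coeff.support := by
    intro g hg
    obtain ⟨h, hh, hgh⟩ := Finset.mem_image.1 hg
    rw [Finsupp.mem_support_iff] at hh ⊢
    rw [← hgh, econst (hrep1 h)]
    exact hh
  have hSfix : ∀ g ∈ S, rep g = g := by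
    intro g hg
    obtain ⟨h, _, hgh⟩ := Finset.mem_image.1 hg
    rw [← hgh, hrepfix]
  have hSne : ∀ g ∈ S, ∀ g' ∈ S, g ≠ g' → ¬ r g g' := by
    intro g hg g' hg' hne hr'
    exact hne ((hSfix g hg).symm.trans ((hrep2 hr').trans (hSfix g' hg')))
  -- support decomposition
  have hsupp : e.coeff.support = S.biUnion orbit := by
    ext x
    constructor
    · intro hx
      refine Finset.mem_biUnion.2 ⟨rep x, Finset.mem_image.2 ⟨x, hx, rfl⟩, ?_⟩
      exact hE (hrep1 x)
    · intro hx
      obtain ⟨g, hg, hxg⟩ := Finset.mem_biUnion.1 hx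
      rw [Finsupp.mem_support_iff]
      rw [econst (hsymm (hmemr hxg))]
      exact Finsupp.mem_support_iff.1 (hSsupp g hg)
  have hdisj : ∀ g ∈ S, ∀ g' ∈ S, g ≠ g' → Disjoint (orbit g) (orbit g') := by
    intro g hg g' hg' hne
    rw [Finset.disjoint_left]
    intro x hx hx'
    exact hSne g hg g' hg' hne (htrans (hmemr hx) (hsymm (hmemr hx')))
  refine ⟨S, l, ?_, ?_, ?_⟩
  · exact fun g _ => ⟨hl1 g, hl2 g⟩
  · intro g hg g' hg' hne i j hij
    exact hSne g hg g' hg' hne ⟨i, j, hij⟩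
  · have h1 : e = ∑ a ∈ e.coeff.support, MonoidAlgebra.single a (1 : ZMod 2) := by
      conv_lhs => rw [← MonoidAlgebra.sum_coeff_single e]
      rw [Finsupp.sum]
      exact Finset.sum_congr rfl fun a ha => by rw [hone a ha]
    rw [h1, hsupp, Finset.sum_biUnion]
    · refine Finset.sum_congr rfl fun g hg => ?_
      rw [horbit]
      exact Finset.sum_image (hF g)
    · intro g hg g' hg' hne
      exact hdisj g hg g' hg' hne
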